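/- Every real inner product space satisfies all the Wirtinger inequalities: for every k ≥ 4, every map g : ZMod k → F into a real inner product space F, and every j ∈ {1, …, k−1}, one has sin²(π/k) · Σ_{c ∈ ZMod k} ‖g(c+j) − g(c)‖² ≤ sin²(πj/k) · Σ_{c ∈ ZMod k} ‖g(c+1) − g(c)‖². -/

import Mathlib

open Real

/-- Monotonicity of sin(jx)/sin x. -/
lemma wir_sinA : ∀ (j : ℕ), 1 ≤ j → ∀ x y : ℝ, 0 ≤ x → x ≤ y → (j:ℝ) * y ≤ π →
    Real.sin ((j:ℝ) * y) * Real.sin x ≤ Real.sin ((j:ℝ) * x) * Real.sin y := by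
  intro j hj
  induction j, hj using Nat.le_induction with
  | base => intro x y _ _ _; simp [mul_comm]
  | succ j hj IH =>
    intro x y hx hxy hjy
    push_cast at hjy
    have hy0 : 0 ≤ y := le_trans hx hxy
    have hj1 : (1:ℝ) ≤ (j:ℝ) := by exact_mod_cast hj
    have hjy1 : ((j:ℝ) - 1) * y ≥ 0 := mul_nonneg (by linarith) hy0
    have hy2 : y ≤ π / 2 := by nlinarith
    have hx2 : x ≤ π / 2 := le_trans hxy hy2
    have hjy' : (j:ℝ) * y ≤ π := by nlinarith
    have hIH := IH x y hx hxy hjy'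
    have hsinx : 0 ≤ Real.sin x := sin_nonneg_of_nonneg_of_le_pi hx (by linarith [pi_pos])
    have hsiny : 0 ≤ Real.sin y := sin_nonneg_of_nonneg_of_le_pi hy0 (by linarith [pi_pos])
    have hsinjy : 0 ≤ Real.sin ((j:ℝ) * y) :=
      sin_nonneg_of_nonneg_of_le_pi (by positivity) hjy'
    have hcosx : 0 ≤ Real.cos x := cos_nonneg_of_mem_Icc ⟨by linarith, hx2⟩
    have hcosxy : Real.cos y ≤ Real.cos x :=
      cos_le_cos_of_nonneg_of_le_pi hx (by linarith [pi_pos]) hxy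
    have hcosj : Real.cos ((j:ℝ) * y) ≤ Real.cos ((j:ℝ) * x) :=
      cos_le_cos_of_nonneg_of_le_pi (by positivity) hjy'
        (by nlinarith)
    have e1 : Real.sin (((j:ℝ)+1) * x) = Real.sin ((j:ℝ)*x) * Real.cos x + Real.cos ((j:ℝ)*x) * Real.sin x := by
      rw [add_mul, one_mul, Real.sin_add]
    have e2 : Real.sin (((j:ℝ)+1) * y) = Real.sin ((j:ℝ)*y) * Real.cos y + Real.cos ((j:ℝ)*y) * Real.sin y := by
      rw [add_mul, one_mul, Real.sin_add]
    push_cast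
    rw [e1, e2]
    have t1 := mul_le_mul_of_nonneg_left hcosxy (mul_nonneg hsinjy hsinx)
    have t2 := mul_le_mul_of_nonneg_right hIH hcosx
    have t3 := mul_le_mul_of_nonneg_right hcosj (mul_nonneg hsinx hsiny)
    nlinarith [t1, t2, t3]

open Complex Finset

/-- key trig inequality, restricted case 2j ≤ k, 2m ≤ k. -/
lemma wir_key' (k j m : ℕ) (hk : 2 ≤ k) (hj1 : 1 ≤ j) (hj2 : 2*j ≤ k)
    (hm1 : 1 ≤ m) (hm2 : 2*m ≤ k) :
    Real.sin (π/k) ^ 2 * Real.sin (π*j*m/k) ^ 2 ≤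
      Real.sin (π*j/k) ^ 2 * Real.sin (π*m/k) ^ 2 := by
  have hk0 : (0:ℝ) < k := by positivity
  have hjR : (1:ℝ) ≤ (j:ℝ) := by exact_mod_cast hj1
  have hmR : (1:ℝ) ≤ (m:ℝ) := by exact_mod_cast hm1
  have hj2R : 2*(j:ℝ) ≤ k := by exact_mod_cast hj2
  have hm2R : 2*(m:ℝ) ≤ k := by exact_mod_cast hm2
  have hpi := pi_pos
  have hs1 : 0 ≤ Real.sin (π/k) :=
    sin_nonneg_of_nonneg_of_le_pi (by positivity)
      (by rw [div_le_iff₀ hk0]; nlinarith)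
  have hsj : 0 ≤ Real.sin (π*j/k) :=
    sin_nonneg_of_nonneg_of_le_pi (by positivity)
      (by rw [div_le_iff₀ hk0]; nlinarith)
  have hsm : 0 ≤ Real.sin (π*m/k) :=
    sin_nonneg_of_nonneg_of_le_pi (by positivity)
      (by rw [div_le_iff₀ hk0]; nlinarith)
  by_cases hcase : (j:ℝ)*m ≤ k
  · -- monotone case
    have h := wir_sinA j hj1 (π/k) (π*m/k) (by positivity)
      (by rw [div_le_div_iff₀ hk0 hk0]
          nlinarith [mul_nonneg (mul_nonneg hpi.le (sub_nonneg.2 hmR)) hk0.le])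
      (by rw [← mul_div_assoc, div_le_iff₀ hk0]; nlinarith)
    have e1 : (j:ℝ) * (π*m/k) = π*j*m/k := by ring
    have e2 : (j:ℝ) * (π/k) = π*j/k := by ring
    rw [e1, e2] at h
    have hsjm : 0 ≤ Real.sin (π*j*m/k) :=
      sin_nonneg_of_nonneg_of_le_pi (by positivity)
        (by rw [div_le_iff₀ hk0]; nlinarith)
    nlinarith [mul_nonneg hsjm hs1, mul_nonneg hsj hsm]
  · -- large jm case
    push_neg at hcase
    have hb1 : 2/π * (π*j/k) ≤ Real.sin (π*j/k) :=
      mul_le_sin (by positivity) (by rw [div_le_div_iff₀ hk0 (by norm_num : (0:ℝ) < 2)]; nlinarith)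
    have hb2 : 2/π * (π*m/k) ≤ Real.sin (π*m/k) :=
      mul_le_sin (by positivity) (by rw [div_le_div_iff₀ hk0 (by norm_num : (0:ℝ) < 2)]; nlinarith)
    have e1 : 2/π * (π*j/k) = 2*j/k := by field_simp
    have e2 : 2/π * (π*m/k) = 2*m/k := by field_simp
    rw [e1] at hb1; rw [e2] at hb2
    have h4 : (4:ℝ)/k ≤ (2*j/k) * (2*m/k) := by
      rw [div_mul_div_comm, div_le_div_iff₀ hk0 (by positivity)]
      have h6 := mul_le_mul_of_nonneg_right hcase.le (by positivity : (0:ℝ) ≤ 4*k)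
      linarith
    have hprod : (4:ℝ)/k ≤ Real.sin (π*j/k) * Real.sin (π*m/k) :=
      h4.trans (mul_le_mul hb1 hb2 (by positivity) hsj)
    have hsin_le : Real.sin (π/k) ≤ 4/k :=
      (Real.sin_le (by positivity)).trans (by gcongr; exact pi_le_four)
    have h5 : Real.sin (π/k) ≤ Real.sin (π*j/k) * Real.sin (π*m/k) := hsin_le.trans hprod
    calc Real.sin (π/k)^2 * Real.sin (π*j*m/k)^2
        ≤ Real.sin (π/k)^2 * 1 :=
          mul_le_mul_of_nonneg_left (Real.sin_sq_le_one _) (sq_nonneg _)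
      _ = Real.sin (π/k)^2 := mul_one _
      _ ≤ (Real.sin (π*j/k) * Real.sin (π*m/k))^2 := pow_le_pow_left₀ hs1 h5 2
      _ = Real.sin (π*j/k)^2 * Real.sin (π*m/k)^2 := mul_pow _ _ _

lemma wir_sin_sq_sub (n : ℕ) (x : ℝ) : Real.sin ((n:ℝ)*π - x)^2 = Real.sin x ^2 := by
  rw [Real.sin_nat_mul_pi_sub, neg_sq, mul_pow, ← pow_mul, mul_comm n 2, pow_mul]
  norm_num

lemma wir_sin_sq_mod (n k : ℕ) (hk : k ≠ 0) :
    Real.sin (π*((n % k : ℕ):ℝ)/k)^2 = Real.sin (π*n/k)^2 := by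
  have hk0 : (0:ℝ) < k := by positivity
  have h : (n:ℝ) = (k:ℝ)*((n/k : ℕ):ℝ) + ((n % k : ℕ):ℝ) := by
    exact_mod_cast (Nat.div_add_mod n k).symm
  have e : π*(n:ℝ)/k = π*((n % k : ℕ):ℝ)/k + ((n/k : ℕ):ℝ)*π := by
    rw [h]; field_simp; ring
  rw [e, Real.sin_add_nat_mul_pi, mul_pow, ← pow_mul, mul_comm _ 2, pow_mul]
  norm_num

/-- key trig inequality, case 2j ≤ k only. -/
lemma wir_keyM (k j m : ℕ) (hk : 2 ≤ k) (hj1 : 1 ≤ j) (hj2 : 2*j ≤ k)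
    (hm1 : 1 ≤ m) (hm2 : m ≤ k - 1) :
    Real.sin (π/k) ^ 2 * Real.sin (π*j*m/k) ^ 2 ≤
      Real.sin (π*j/k) ^ 2 * Real.sin (π*m/k) ^ 2 := by
  have hk0 : (0:ℝ) < k := by positivity
  have hmk : m ≤ k := le_trans hm2 (Nat.sub_le _ _)
  by_cases hm : 2*m ≤ k
  · exact wir_key' k j m hk hj1 hj2 hm1 hm
  · push_neg at hm
    have hm' : 1 ≤ k - m := by omega
    have hm'' : 2*(k-m) ≤ k := by omega
    have hcast : ((k - m : ℕ):ℝ) = (k:ℝ) - m := by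
      rw [Nat.cast_sub hmk]
    have e1 : π*(j:ℝ)*((k-m:ℕ):ℝ)/k = (j:ℝ)*π - π*j*m/k := by
      rw [hcast]; field_simp
    have e2 : π*((k-m:ℕ):ℝ)/k = (1:ℕ)*π - π*m/k := by
      rw [hcast]; push_cast; field_simp
    have h := wir_key' k j (k-m) hk hj1 hj2 hm' hm''
    rw [e1, e2, wir_sin_sq_sub, wir_sin_sq_sub] at h
    exact h

/-- key trig inequality. -/
lemma wir_key (k j m : ℕ) (hk : 2 ≤ k) (hj1 : 1 ≤ j) (hj2 : j ≤ k - 1)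
    (hm1 : 1 ≤ m) (hm2 : m ≤ k - 1) :
    Real.sin (π/k) ^ 2 * Real.sin (π*j*m/k) ^ 2 ≤
      Real.sin (π*j/k) ^ 2 * Real.sin (π*m/k) ^ 2 := by
  have hk0 : (0:ℝ) < k := by positivity
  have hjk : j ≤ k := le_trans hj2 (Nat.sub_le _ _)
  by_cases hj : 2*j ≤ k
  · exact wir_keyM k j m hk hj1 hj hm1 hm2
  · push_neg at hj
    have hj' : 1 ≤ k - j := by omega
    have hj'' : 2*(k-j) ≤ k := by omega
    have hcast : ((k - j : ℕ):ℝ) = (k:ℝ) - j := by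
      rw [Nat.cast_sub hjk]
    have e1 : π*((k-j:ℕ):ℝ)*(m:ℝ)/k = (m:ℝ)*π - π*j*m/k := by
      rw [hcast]; field_simp
    have e2 : π*((k-j:ℕ):ℝ)/k = (1:ℕ)*π - π*j/k := by
      rw [hcast]; push_cast; field_simp
    have h := wir_keyM k (k-j) m hk hj' hj'' hm1 hm2
    rw [e1, e2, wir_sin_sq_sub, wir_sin_sq_sub] at h
    exact h

section WirFourier

variable {k : ℕ} [NeZero k]

noncomputable def wchi (x : ZMod k) : ℂ :=
  Complex.exp (((2 * π * x.val / k : ℝ) : ℂ) * Complex.I)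

lemma wchi_natCast (n : ℕ) :
    wchi (n : ZMod k) = Complex.exp (((2 * π * n / k : ℝ) : ℂ) * Complex.I) := by
  unfold wchi
  rw [ZMod.val_natCast]
  rw [Complex.exp_eq_exp_iff_exists_int]
  have hd := Nat.div_add_mod n k
  set q := n / k with hq
  set r := n % k with hr
  refine ⟨-(q:ℤ), ?_⟩
  have h : (r:ℝ) = (n:ℝ) - (k:ℝ)*(q:ℝ) := by
    have h2 : ((k * q + r : ℕ):ℝ) = (n:ℝ) := by exact_mod_cast congrArg (Nat.cast : ℕ → ℝ) hd
    push_cast at h2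
    linarith
  have hkC : (k:ℂ) ≠ 0 := Nat.cast_ne_zero.2 (NeZero.ne k)
  push_cast [h]
  field_simp
  ring

lemma wchi_add (a b : ZMod k) : wchi (a + b) = wchi a * wchi b := by
  have ha : ((a.val : ℕ) : ZMod k) = a := by simp [ZMod.natCast_val, ZMod.cast_id]
  have hb : ((b.val : ℕ) : ZMod k) = b := by simp [ZMod.natCast_val, ZMod.cast_id]
  have h : a + b = ((a.val + b.val : ℕ) : ZMod k) := by push_cast [ha, hb]; ring
  rw [h, wchi_natCast]
  conv_rhs => rw [← ha, ← hb, wchi_natCast, wchi_natCast]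
  rw [← Complex.exp_add]
  congr 1
  push_cast
  ring

lemma wchi_zero : wchi (0 : ZMod k) = 1 := by
  have : ((0:ℕ) : ZMod k) = 0 := by norm_num
  rw [← this, wchi_natCast]
  norm_num

lemma wchi_ne_zero (x : ZMod k) : wchi x ≠ 0 := Complex.exp_ne_zero _

lemma norm_wchi (x : ZMod k) : ‖wchi x‖ = 1 := Complex.norm_exp_ofReal_mul_I _

lemma conj_wchi (x : ZMod k) : (starRingEnd ℂ) (wchi x) = wchi (-x) := by
  have h1 : wchi x * wchi (-x) = 1 := by
    rw [← wchi_add]; simp [wchi_zero]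
  have h2 : wchi x * (starRingEnd ℂ) (wchi x) = 1 := by
    rw [Complex.mul_conj]
    norm_cast
    rw [Complex.normSq_eq_norm_sq, norm_wchi]; norm_num
  exact mul_left_cancel₀ (wchi_ne_zero x) (h2.trans h1.symm)

lemma wchi_nat_mul (n : ℕ) (d : ZMod k) : wchi ((n : ZMod k) * d) = wchi d ^ n := by
  induction n with
  | zero => simp [wchi_zero]
  | succ n ih =>
    have : ((n+1 : ℕ) : ZMod k) * d = (n : ZMod k) * d + d := by push_cast; ring
    rw [this, wchi_add, ih, pow_succ]

lemma wchi_one_ne_one {d : ZMod k} (hd : d ≠ 0) : wchi d ≠ 1 := by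
  intro h
  unfold wchi at h
  rw [Complex.exp_eq_one_iff] at h
  obtain ⟨n, hn⟩ := h
  have hk0 : (0:ℝ) < k := Nat.cast_pos.2 (Nat.pos_of_ne_zero (NeZero.ne k))
  have hpi := Real.pi_pos
  have hv1 : 1 ≤ d.val := Nat.one_le_iff_ne_zero.2 (fun h0 => hd ((ZMod.val_eq_zero d).1 h0))
  have hv2 : d.val < k := ZMod.val_lt d
  obtain ⟨v, hveq⟩ : ∃ v:ℕ, v = d.val := ⟨_, rfl⟩
  rw [← hveq] at hn hv1 hv2
  have h2 : ((2*π*(v:ℝ)/k :ℝ):ℂ) = (((n:ℝ)*(2*π) :ℝ):ℂ) :=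
    mul_right_cancel₀ Complex.I_ne_zero (hn.trans (by push_cast; ring))
  have him : 2*π*(v:ℝ)/k = (n:ℝ)*(2*π) := by exact_mod_cast h2
  have hv1R : (1:ℝ) ≤ (v:ℝ) := by exact_mod_cast hv1
  have hv2R : (v:ℝ) < k := by exact_mod_cast hv2
  have heq : (v:ℝ) = n * k := by
    have h3 : (2*π)*(v:ℝ) = (2*π)*((n:ℝ)*k) := by
      field_simp at him
      rw [him]; ring
    have := mul_left_cancel₀ (by positivity : (2*π:ℝ) ≠ 0) h3
    linarith
  have h0 : 0 < n := by
    have : (0:ℝ) < (n:ℝ) := by nlinarith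
    exact_mod_cast this
  have h1 : n < 1 := by
    have : (n:ℝ) < 1 := by nlinarith
    exact_mod_cast this
  omega

lemma wchi_sum (d : ZMod k) : ∑ m : ZMod k, wchi (m * d) = if d = 0 then (k:ℂ) else 0 := by
  split_ifs with hd
  · subst hd
    simp only [mul_zero, wchi_zero]
    simp [Finset.card_univ, ZMod.card]
  · have hm : ∀ m : ZMod k, wchi (m * d) = wchi d ^ m.val := by
      intro m
      have : ((m.val : ℕ) : ZMod k) = m := by simp [ZMod.natCast_val, ZMod.cast_id]
      rw [← wchi_nat_mul, this]
    simp only [hm]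
    have hre : ∑ m : ZMod k, wchi d ^ m.val = ∑ i ∈ Finset.range k, wchi d ^ i := by
      refine Finset.sum_nbij' (fun m => m.val) (fun i => (i : ZMod k)) ?_ ?_ ?_ ?_ ?_
      · intro a _; exact Finset.mem_range.2 (ZMod.val_lt a)
      · intro a _; exact Finset.mem_univ _
      · intro a _; simp [ZMod.natCast_val, ZMod.cast_id]
      · intro a ha; exact ZMod.val_natCast_of_lt (Finset.mem_range.1 ha)
      · intro a _; rfl
    rw [hre, geom_sum_eq (wchi_one_ne_one hd)]
    have : wchi d ^ k = 1 := by
      rw [← wchi_nat_mul, ZMod.natCast_self, zero_mul, wchi_zero]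
    rw [this]
    simp

noncomputable def wT (f : ZMod k → ℂ) (m : ZMod k) : ℂ := ∑ c : ZMod k, f c * wchi (m * c)

lemma wT_parseval (f : ZMod k → ℂ) :
    ∑ m : ZMod k, wT f m * (starRingEnd ℂ) (wT f m)
      = (k:ℂ) * ∑ c : ZMod k, f c * (starRingEnd ℂ) (f c) := by
  calc ∑ m : ZMod k, wT f m * (starRingEnd ℂ) (wT f m)
      = ∑ m : ZMod k, ∑ c : ZMod k, ∑ c' : ZMod k,
          (f c * (starRingEnd ℂ) (f c')) * wchi (m * (c - c')) := by
        refine Finset.sum_congr rfl fun m _ => ?_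
        rw [wT, map_sum, Finset.sum_mul_sum]
        refine Finset.sum_congr rfl fun c _ => Finset.sum_congr rfl fun c' _ => ?_
        rw [map_mul, conj_wchi]
        have h : m * (c - c') = m * c + -(m * c') := by ring
        rw [h, wchi_add]
        ring
    _ = ∑ c : ZMod k, ∑ c' : ZMod k,
          (f c * (starRingEnd ℂ) (f c')) * ∑ m : ZMod k, wchi (m * (c - c')) := by
        rw [Finset.sum_comm]
        refine Finset.sum_congr rfl fun c _ => ?_
        rw [Finset.sum_comm]
        exact Finset.sum_congr rfl fun c' _ => (Finset.mul_sum _ _ _).symm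
    _ = ∑ c : ZMod k, (f c * (starRingEnd ℂ) (f c)) * k := by
        refine Finset.sum_congr rfl fun c _ => ?_
        simp only [wchi_sum, sub_eq_zero, mul_ite, mul_zero]
        simp [eq_comm]
    _ = (k:ℂ) * ∑ c : ZMod k, f c * (starRingEnd ℂ) (f c) := by
        rw [← Finset.sum_mul, mul_comm]

lemma wT_parseval_norm (f : ZMod k → ℂ) :
    ∑ m : ZMod k, ‖wT f m‖^2 = (k:ℝ) * ∑ c : ZMod k, ‖f c‖^2 := by
  have h := wT_parseval f
  simp only [Complex.mul_conj] at h
  have h' : ∑ m : ZMod k, Complex.normSq (wT f m) = (k:ℝ) * ∑ c : ZMod k, Complex.normSq (f c) := by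
    exact_mod_cast h
  simpa only [Complex.normSq_eq_norm_sq] using h'

lemma wT_shift (f : ZMod k → ℂ) (a m : ZMod k) :
    wT (fun c => f (c + a)) m = wchi (-(m*a)) * wT f m := by
  have h1 : ∑ c : ZMod k, f (c+a) * wchi (m*c) = ∑ c : ZMod k, f c * wchi (m*(c-a)) :=
    Fintype.sum_equiv (Equiv.addRight a) _ _ (fun c => by simp)
  rw [wT]
  rw [h1]
  calc ∑ c : ZMod k, f c * wchi (m*(c-a))
      = ∑ c : ZMod k, wchi (-(m*a)) * (f c * wchi (m*c)) := by
        refine Finset.sum_congr rfl fun c _ => ?_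
        rw [show m*(c-a) = -(m*a) + m*c from by ring, wchi_add]
        ring
    _ = wchi (-(m*a)) * wT f m := (Finset.mul_sum _ _ _).symm

lemma wT_sub (f g : ZMod k → ℂ) (m : ZMod k) :
    wT (fun c => f c - g c) m = wT f m - wT g m := by
  simp [wT, sub_mul, Finset.sum_sub_distrib]

lemma norm_wchi_sub_one (x : ZMod k) :
    ‖wchi x - 1‖^2 = 4 * Real.sin (π * x.val / k)^2 := by
  unfold wchi
  set θ : ℝ := 2*π*x.val/k with hθ
  have hns : Complex.normSq (Complex.exp ((θ:ℂ)*Complex.I) - 1)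
      = (Real.cos θ - 1)^2 + (Real.sin θ)^2 := by
    rw [Complex.normSq_apply, Complex.sub_re, Complex.sub_im,
      Complex.exp_ofReal_mul_I_re, Complex.exp_ofReal_mul_I_im, Complex.one_re, Complex.one_im]
    ring
  rw [Complex.sq_norm, hns]
  have hs := Real.sin_sq_eq_half_sub (θ/2)
  rw [show 2*(θ/2) = θ from by ring] at hs
  rw [show π * (x.val:ℝ) / k = θ/2 from by rw [hθ]; ring, hs]
  linear_combination Real.sin_sq_add_cos_sq θ

lemma norm_wchi_neg_sub_one (y : ZMod k) :
    ‖wchi (-y) - 1‖ = ‖wchi y - 1‖ := by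
  rw [← Complex.norm_conj (wchi y - 1)]
  congr 1
  rw [map_sub, conj_wchi, map_one]

lemma wir_identity (f : ZMod k → ℂ) (a : ZMod k) :
    (k:ℝ) * ∑ c : ZMod k, ‖f (c + a) - f c‖^2
      = ∑ m : ZMod k, 4 * Real.sin (π * ((m*a).val:ℝ) / k)^2 * ‖wT f m‖^2 := by
  have hp := wT_parseval_norm (fun c => f (c + a) - f c)
  have hw : ∀ m : ZMod k, wT (fun c => f (c + a) - f c) m
      = (wchi (-(m*a)) - 1) * wT f m := by
    intro m
    rw [wT_sub (fun c => f (c+a)) f, wT_shift, sub_mul, one_mul]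
  rw [← hp]
  refine Finset.sum_congr rfl fun m _ => ?_
  rw [hw, norm_mul, mul_pow, norm_wchi_neg_sub_one, norm_wchi_sub_one]

lemma wir_scalarC (hk : 2 ≤ k) (f : ZMod k → ℂ) (j : ℕ) (hj1 : 1 ≤ j) (hj2 : j ≤ k - 1) :
    Real.sin (π/k)^2 * ∑ c : ZMod k, ‖f (c + (j : ZMod k)) - f c‖^2 ≤
      Real.sin (π*j/k)^2 * ∑ c : ZMod k, ‖f (c + 1) - f c‖^2 := by
  have hk0 : (0:ℝ) < k := Nat.cast_pos.2 (by omega)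
  have hjk : j < k := by omega
  have hEj := wir_identity f (j : ZMod k)
  have hE1 := wir_identity f 1
  set Ej := ∑ c : ZMod k, ‖f (c + (j : ZMod k)) - f c‖^2 with hEjdef
  set E1 := ∑ c : ZMod k, ‖f (c + 1) - f c‖^2 with hE1def
  suffices h : (k:ℝ) * (Real.sin (π/k)^2 * Ej) ≤ (k:ℝ) * (Real.sin (π*j/k)^2 * E1) from
    le_of_mul_le_mul_left h hk0
  have per : ∀ m : ZMod k, m ∈ Finset.univ →
      Real.sin (π/k)^2 * (4 * Real.sin (π * (((m*(j:ZMod k)).val):ℝ) / k)^2 * ‖wT f m‖^2)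
        ≤ Real.sin (π*j/k)^2 * (4 * Real.sin (π * (((m*(1:ZMod k)).val):ℝ) / k)^2 * ‖wT f m‖^2) := by
    intro m _
    rw [mul_one]
    by_cases hm : m = 0
    · subst hm
      simp [ZMod.val_zero]
    · have hm1 : 1 ≤ m.val := ZMod.val_pos.2 hm
      have hm2 : m.val ≤ k - 1 := by have := ZMod.val_lt m; omega
      have e1 : Real.sin (π*(((m*(j:ZMod k)).val):ℝ)/k)^2 = Real.sin (π*(j:ℝ)*(m.val:ℝ)/k)^2 := by
        rw [ZMod.val_mul]
        have hjv : (j : ZMod k).val = j := by rw [ZMod.val_natCast, Nat.mod_eq_of_lt hjk]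
        rw [hjv, wir_sin_sq_mod (m.val * j) k (NeZero.ne k)]
        rw [show π*((m.val*j : ℕ):ℝ)/k = π*(j:ℝ)*(m.val:ℝ)/k from by push_cast; ring]
      rw [e1]
      have hkey := wir_key k j m.val hk hj1 hj2 hm1 hm2
      have hA : (0:ℝ) ≤ ‖wT f m‖^2 := by positivity
      calc Real.sin (π/k)^2 * (4 * Real.sin (π*(j:ℝ)*(m.val:ℝ)/k)^2 * ‖wT f m‖^2)
          = 4 * ‖wT f m‖^2 * (Real.sin (π/k)^2 * Real.sin (π*(j:ℝ)*(m.val:ℝ)/k)^2) := by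
            ring
        _ ≤ 4 * ‖wT f m‖^2 * (Real.sin (π*j/k)^2 * Real.sin (π*(m.val:ℝ)/k)^2) := by
            apply mul_le_mul_of_nonneg_left hkey (by positivity)
        _ = Real.sin (π*j/k)^2 * (4 * Real.sin (π*((m.val):ℝ)/k)^2 * ‖wT f m‖^2) := by
            ring
  calc (k:ℝ) * (Real.sin (π/k)^2 * Ej) = Real.sin (π/k)^2 * ((k:ℝ) * Ej) := by ring
    _ = ∑ m : ZMod k, Real.sin (π/k)^2 *
        (4 * Real.sin (π * (((m*(j:ZMod k)).val):ℝ) / k)^2 * ‖wT f m‖^2) := by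
          rw [hEj, Finset.mul_sum]
    _ ≤ ∑ m : ZMod k, Real.sin (π*j/k)^2 *
        (4 * Real.sin (π * (((m*(1:ZMod k)).val):ℝ) / k)^2 * ‖wT f m‖^2) :=
          Finset.sum_le_sum per
    _ = Real.sin (π*j/k)^2 * ((k:ℝ) * E1) := by rw [← Finset.mul_sum, ← hE1]
    _ = (k:ℝ) * (Real.sin (π*j/k)^2 * E1) := by ring

lemma wir_scalarR (hk : 2 ≤ k) (f : ZMod k → ℝ) (j : ℕ) (hj1 : 1 ≤ j) (hj2 : j ≤ k - 1) :
    Real.sin (π/k)^2 * ∑ c : ZMod k, (f (c + (j : ZMod k)) - f c)^2 ≤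
      Real.sin (π*j/k)^2 * ∑ c : ZMod k, (f (c + 1) - f c)^2 := by
  have h := wir_scalarC hk (fun c => (f c : ℂ)) j hj1 hj2
  simp only [← Complex.ofReal_sub, Complex.norm_real, Real.norm_eq_abs, _root_.sq_abs] at h
  exact h

end WirFourier

theorem inner_product_space_satisfies_wirtinger
    (F : Type*) [NormedAddCommGroup F] [InnerProductSpace ℝ F]
    (k : ℕ) [NeZero k] (hk : 4 ≤ k)
    (g : ZMod k → F) (j : ℕ) (hj1 : 1 ≤ j) (hj2 : j ≤ k - 1) :
    Real.sin (Real.pi / k) ^ 2 * ∑ c : ZMod k, ‖g (c + (j : ZMod k)) - g c‖ ^ 2 ≤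
      Real.sin (Real.pi * j / k) ^ 2 * ∑ c : ZMod k, ‖g (c + 1) - g c‖ ^ 2 := by
  classical
  have hk2 : 2 ≤ k := by omega
  set V := Submodule.span ℝ (Set.range g) with hV
  haveI : FiniteDimensional ℝ V := FiniteDimensional.span_of_finite ℝ (Set.finite_range g)
  set b := stdOrthonormalBasis ℝ V with hb
  set G : ZMod k → V := fun c => ⟨g c, Submodule.subset_span ⟨c, rfl⟩⟩ with hG
  set f : Fin (Module.finrank ℝ V) → ZMod k → ℝ := fun i c => b.repr (G c) i with hf
  have hnorm : ∀ x y : ZMod k, ‖g x - g y‖^2 = ∑ i, (f i x - f i y)^2 := by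
    intro x y
    have h1 : ‖g x - g y‖ = ‖G x - G y‖ := by
      have hcoe : ((G x - G y : V) : F) = g x - g y := rfl
      rw [Submodule.coe_norm, hcoe]
    have h2 : ‖G x - G y‖ = ‖b.repr (G x) - b.repr (G y)‖ := by
      rw [← map_sub]
      exact (b.repr.norm_map _).symm
    rw [h1, h2, EuclideanSpace.norm_eq, Real.sq_sqrt (by positivity)]
    refine Finset.sum_congr rfl fun i _ => ?_
    simp [hf, Real.norm_eq_abs, sq_abs]
  calc Real.sin (π / k) ^ 2 * ∑ c : ZMod k, ‖g (c + (j : ZMod k)) - g c‖ ^ 2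
      = Real.sin (π / k) ^ 2 * ∑ c : ZMod k, ∑ i, (f i (c + (j : ZMod k)) - f i c)^2 := by
        rw [Finset.sum_congr rfl fun c _ => hnorm (c + (j : ZMod k)) c]
    _ = ∑ i, Real.sin (π / k) ^ 2 * ∑ c : ZMod k, (f i (c + (j : ZMod k)) - f i c)^2 := by
        rw [Finset.sum_comm, Finset.mul_sum]
    _ ≤ ∑ i, Real.sin (π * j / k) ^ 2 * ∑ c : ZMod k, (f i (c + 1) - f i c)^2 :=
        Finset.sum_le_sum fun i _ => wir_scalarR hk2 (f i) j hj1 hj2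
    _ = Real.sin (π * j / k) ^ 2 * ∑ c : ZMod k, ∑ i, (f i (c + 1) - f i c)^2 := by
        rw [Finset.sum_comm, Finset.mul_sum]
    _ = Real.sin (π * j / k) ^ 2 * ∑ c : ZMod k, ‖g (c + 1) - g c‖ ^ 2 := by
        rw [Finset.sum_congr rfl fun c _ => (hnorm (c + 1) c).symm]
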